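/- Let X be a topological space, Y a totally disconnected compact Hausdorff topological space, and f : X → Y a continuous map. Then there exists a unique continuous map g : UF(X) → Y such that f = g ∘ F(·), where F(·) : X → UF(X) is the map sending each point to its principal ultrafilter. In other words, UF(X) together with F(·) is the universal totally disconnected Hausdorff compactification of X. -/

import Mathlib

open Set Topology BoundedContinuousFunction

/-- An ultrafilter of the Boolean algebra `CO(X)` of clopen subsets of `X`: a family of
clopen sets not containing `∅`, closed under binary intersections, upward closed (within
clopen sets), and containing `U` or `Uᶜ` for every clopen `U`. -/
structure ClopenUltrafilter (X : Type*) [TopologicalSpace X] where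
  sets : Set (Set X)
  isClopen_of_mem : ∀ U ∈ sets, IsClopen U
  empty_not_mem : ∅ ∉ sets
  inter_mem : ∀ U ∈ sets, ∀ V ∈ sets, U ∩ V ∈ sets
  mem_of_superset : ∀ U ∈ sets, ∀ V : Set X, IsClopen V → U ⊆ V → V ∈ sets
  mem_or_compl_mem : ∀ U : Set X, IsClopen U → U ∈ sets ∨ Uᶜ ∈ sets

/-- The topology on `UF(X)` with open basis the sets `{F : U ∈ F}` for `U` clopen. -/
instance (X : Type*) [TopologicalSpace X] : TopologicalSpace (ClopenUltrafilter X) :=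
  TopologicalSpace.generateFrom
    {S | ∃ U : Set X, IsClopen U ∧ S = {F : ClopenUltrafilter X | U ∈ F.sets}}

/-- The principal ultrafilter of clopen sets at a point `x`. -/
def principalCU (X : Type*) [TopologicalSpace X] (x : X) : ClopenUltrafilter X where
  sets := {U : Set X | IsClopen U ∧ x ∈ U}
  isClopen_of_mem := fun _ hU => hU.1
  empty_not_mem := fun h => Set.notMem_empty x h.2
  inter_mem := fun U hU V hV => ⟨hU.1.inter hV.1, hU.2, hV.2⟩
  mem_of_superset := fun U hU V hV hUV => ⟨hV, hUV hU.2⟩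
  mem_or_compl_mem := fun U hU => by
    by_cases hx : x ∈ U
    · exact Or.inl ⟨hU, hx⟩
    · exact Or.inr ⟨hU.compl, hx⟩

/-- A cluster point of an ultrafilter of clopen sets: a point all of whose clopen
neighbourhoods belong to the ultrafilter. -/
def ClopenUltrafilter.IsClusterPoint {X : Type*} [TopologicalSpace X]
    (F : ClopenUltrafilter X) (x : X) : Prop :=
  ∀ U : Set X, IsClopen U → x ∈ U → U ∈ F.sets

section Aux

variable {X : Type*} [TopologicalSpace X]

theorem CU.univ_mem (F : ClopenUltrafilter X) : Set.univ ∈ F.sets := by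
  rcases F.mem_or_compl_mem ∅ isClopen_empty with h | h
  · exact absurd h F.empty_not_mem
  · simpa using h

theorem CU.nonempty_of_mem {F : ClopenUltrafilter X} {U : Set X} (h : U ∈ F.sets) :
    U.Nonempty := by
  rcases Set.eq_empty_or_nonempty U with rfl | hU
  · exact absurd h F.empty_not_mem
  · exact hU

theorem CU.isOpen_basic (U : Set X) (hU : IsClopen U) :
    IsOpen {F : ClopenUltrafilter X | U ∈ F.sets} :=
  TopologicalSpace.GenerateOpen.basic _ ⟨U, hU, rfl⟩

variable {Y : Type*} [TopologicalSpace Y] [CompactSpace Y] [T2Space Y]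
    [TotallyDisconnectedSpace Y] {f : X → Y}

/-- The key lemma: the clopen sets of `Y` whose preimage lies in `F` have a unique
common point. -/
theorem CU.existsUnique_point (hf : Continuous f) (F : ClopenUltrafilter X) :
    ∃! y : Y, y ∈ ⋂₀ {V : Set Y | IsClopen V ∧ f ⁻¹' V ∈ F.sets} := by
  set S : Set (Set Y) := {V : Set Y | IsClopen V ∧ f ⁻¹' V ∈ F.sets} with hS
  have huniv : Set.univ ∈ S := ⟨isClopen_univ, by simpa using CU.univ_mem F⟩
  have hinter : ∀ U ∈ S, ∀ V ∈ S, U ∩ V ∈ S := by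
    rintro U ⟨hU, hUF⟩ V ⟨hV, hVF⟩
    exact ⟨hU.inter hV, by rw [Set.preimage_inter]; exact F.inter_mem _ hUF _ hVF⟩
  have hne : (⋂₀ S).Nonempty := by
    have : Nonempty S := ⟨⟨Set.univ, huniv⟩⟩
    apply IsCompact.nonempty_sInter_of_directed_nonempty_isCompact_isClosed
    · rintro U hU V hV
      exact ⟨U ∩ V, hinter U hU V hV, Set.inter_subset_left, Set.inter_subset_right⟩
    · rintro U ⟨hU, hUF⟩
      rcases CU.nonempty_of_mem hUF with ⟨x, hx⟩
      exact ⟨f x, hx⟩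
    · rintro U ⟨hU, -⟩; exact hU.isClosed.isCompact
    · rintro U ⟨hU, -⟩; exact hU.isClosed
  rcases hne with ⟨y, hy⟩
  refine ⟨y, hy, fun z hz => ?_⟩
  by_contra hzy
  rcases exists_isClopen_of_totally_separated hzy with ⟨V, hV, hzV, hyV⟩
  have hpre : IsClopen (f ⁻¹' V) := hV.preimage hf
  rcases F.mem_or_compl_mem _ hpre with h | h
  · exact hyV (hy V ⟨hV, h⟩)
  · have : z ∈ Vᶜ := hz Vᶜ ⟨hV.compl, by rwa [Set.preimage_compl]⟩
    exact this hzV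

end Aux

/-- `UF(X)` together with the principal-ultrafilter map is the universal
totally disconnected Hausdorff compactification of `X`: every continuous map from `X` to a
totally disconnected compact Hausdorff space `Y` factors uniquely through a continuous map
`UF(X) → Y`. -/
theorem clopenUltrafilter_universal_property (X : Type*) [TopologicalSpace X]
    (Y : Type*) [TopologicalSpace Y] [CompactSpace Y] [T2Space Y]
    [TotallyDisconnectedSpace Y] (f : X → Y) (hf : Continuous f) :
    ∃! g : ClopenUltrafilter X → Y, Continuous g ∧ f = g ∘ principalCU X := by
  classical
  -- The basis of `UF(X)`
  have hbasis : TopologicalSpace.IsTopologicalBasis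
      {S | ∃ U : Set X, IsClopen U ∧ S = {F : ClopenUltrafilter X | U ∈ F.sets}} := by
    refine ⟨?_, ?_, rfl⟩
    · rintro t₁ ⟨U, hU, rfl⟩ t₂ ⟨V, hV, rfl⟩ F ⟨hF₁, hF₂⟩
      refine ⟨{F | U ∩ V ∈ F.sets}, ⟨U ∩ V, hU.inter hV, rfl⟩,
        F.inter_mem _ hF₁ _ hF₂, fun G hG => ?_⟩
      exact ⟨G.mem_of_superset _ hG _ hU Set.inter_subset_left,
        G.mem_of_superset _ hG _ hV Set.inter_subset_right⟩
    · refine Set.eq_univ_of_forall fun F => ?_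
      exact Set.mem_sUnion.2 ⟨_, ⟨Set.univ, isClopen_univ, rfl⟩, CU.univ_mem F⟩
  set g : ClopenUltrafilter X → Y := fun F => (CU.existsUnique_point hf F).exists.choose
    with hg_def
  have hg_mem : ∀ F : ClopenUltrafilter X,
      g F ∈ ⋂₀ {V : Set Y | IsClopen V ∧ f ⁻¹' V ∈ F.sets} := fun F =>
    (CU.existsUnique_point hf F).exists.choose_spec
  have hg_uniq : ∀ (F : ClopenUltrafilter X) (y : Y),
      y ∈ ⋂₀ {V : Set Y | IsClopen V ∧ f ⁻¹' V ∈ F.sets} → y = g F := fun F y hy =>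
    (CU.existsUnique_point hf F).unique hy (hg_mem F)
  -- the key membership characterization
  have hkey : ∀ (F : ClopenUltrafilter X) (V : Set Y), IsClopen V →
      (g F ∈ V ↔ f ⁻¹' V ∈ F.sets) := by
    intro F V hV
    constructor
    · intro hgV
      rcases F.mem_or_compl_mem (f ⁻¹' V) (hV.preimage hf) with h | h
      · exact h
      · exact absurd (hg_mem F Vᶜ ⟨hV.compl, by rwa [Set.preimage_compl]⟩) (not_not.2 hgV)
    · intro h
      exact hg_mem F V ⟨hV, h⟩
  have hgc : Continuous g := by
    rw [isTopologicalBasis_isClopen.continuous_iff]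
    rintro V hV
    have : g ⁻¹' V = {F : ClopenUltrafilter X | f ⁻¹' V ∈ F.sets} :=
      Set.ext fun F => hkey F V hV
    rw [this]
    exact CU.isOpen_basic _ (hV.preimage hf)
  have hfact : f = g ∘ principalCU X := by
    funext x
    refine hg_uniq _ _ fun V hV => ?_
    rcases hV with ⟨hV, hVx⟩
    exact hVx.2
  refine ⟨g, ⟨hgc, hfact⟩, ?_⟩
  rintro g' ⟨hg'c, hg'fact⟩
  -- uniqueness via density of principal ultrafilters
  have hdense : Dense (Set.range (principalCU X)) := by
    rw [hbasis.dense_iff]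
    rintro o ⟨U, hU, rfl⟩ ⟨F, hF⟩
    rcases CU.nonempty_of_mem hF with ⟨x, hx⟩
    exact ⟨principalCU X x, ⟨hU, hx⟩, x, rfl⟩
  apply Continuous.ext_on hdense hg'c hgc
  rintro _ ⟨x, rfl⟩
  have h1 : g' (principalCU X x) = f x := by rw [hg'fact]; rfl
  have h2 : g (principalCU X x) = f x := by rw [hfact]; rfl
  rw [h1, h2]
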